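/- There exists an absolute constant C > 0 with the following property. For every ε ∈ (0, 1/100], δ ∈ (0, 1/4], and μ ∈ [−1 + δ, −δ], there exists an odd real polynomial q of degree at most C · (√(1 + μ)/δ) · (1 + log(1/δ)) · (1 + log(1/ε))^{3/2} such that: |q(x)| ≤ 1 for all x ∈ [−1,1]; q(μ) ≤ −1 + 3ε; and q(x) ≥ −3ε for every x ∈ [μ + δ, 1]. -/

import Mathlib

open Real Polynomial

namespace GapAmpAux

noncomputable section

/-- The span of the functions `θ ↦ cos (j θ)` for `j ≤ D`. -/
def cosSpan (D : ℕ) : Submodule ℝ (ℝ → ℝ) :=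
  Submodule.span ℝ ((fun j : ℕ => fun θ : ℝ => Real.cos (j * θ)) '' {j | j ≤ D})

lemma cos_mem_cosSpan {j D : ℕ} (h : j ≤ D) :
    (fun θ : ℝ => Real.cos (j * θ)) ∈ cosSpan D :=
  Submodule.subset_span ⟨j, h, rfl⟩

lemma cos_mul_cos_mem {i j m n : ℕ} (hi : i ≤ m) (hj : j ≤ n) :
    ((fun θ : ℝ => Real.cos (i * θ)) * fun θ : ℝ => Real.cos (j * θ)) ∈ cosSpan (m + n) := by
  have main : ∀ p q : ℕ, q ≤ p → p + q ≤ m + n →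
      ((fun θ : ℝ => Real.cos (p * θ)) * fun θ : ℝ => Real.cos (q * θ)) ∈ cosSpan (m + n) := by
    intro p q hqp hpq
    have hfun : ((fun θ : ℝ => Real.cos (p * θ)) * fun θ : ℝ => Real.cos (q * θ))
        = (1/2 : ℝ) • (fun θ : ℝ => Real.cos (((p + q : ℕ)) * θ))
          + (1/2 : ℝ) • (fun θ : ℝ => Real.cos (((p - q : ℕ)) * θ)) := by
      funext θ
      have h1 : ((p + q : ℕ) : ℝ) * θ = (p * θ) + (q * θ) := by push_cast; ring
      have h2 : ((p - q : ℕ) : ℝ) * θ = (p * θ) - (q * θ) := by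
        rw [Nat.cast_sub hqp]; ring
      simp only [Pi.mul_apply, Pi.add_apply, Pi.smul_apply, smul_eq_mul, h1, h2,
        Real.cos_add, Real.cos_sub]
      ring
    rw [hfun]
    exact add_mem (Submodule.smul_mem _ _ (cos_mem_cosSpan (by omega)))
      (Submodule.smul_mem _ _ (cos_mem_cosSpan (by omega)))
  rcases le_total j i with h | h
  · exact main i j h (by omega)
  · rw [mul_comm]
    exact main j i h (by omega)

lemma mul_mem_cosSpan {m n : ℕ} {f g : ℝ → ℝ} (hf : f ∈ cosSpan m) (hg : g ∈ cosSpan n) :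
    f * g ∈ cosSpan (m + n) := by
  induction hf using Submodule.span_induction with
  | mem f' hf' =>
    obtain ⟨i, hi, rfl⟩ := hf'
    induction hg using Submodule.span_induction with
    | mem g' hg' =>
      obtain ⟨j, hj, rfl⟩ := hg'
      exact cos_mul_cos_mem hi hj
    | zero => simpa [mul_zero] using (cosSpan (m + n)).zero_mem
    | add x y hx hy ihx ihy => rw [mul_add]; exact add_mem ihx ihy
    | smul a x hx ih => rw [mul_smul_comm]; exact Submodule.smul_mem _ _ ih
  | zero => simpa [zero_mul] using (cosSpan (m + n)).zero_mem
  | add x y hx hy ihx ihy => rw [add_mul]; exact add_mem ihx ihy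
  | smul a x hx ih => rw [smul_mul_assoc]; exact Submodule.smul_mem _ _ ih

lemma pow_mem_cosSpan {m : ℕ} {f : ℝ → ℝ} (hf : f ∈ cosSpan m) :
    ∀ n : ℕ, f ^ n ∈ cosSpan (n * m) := by
  intro n
  induction n with
  | zero =>
    have h1 : (f ^ 0 : ℝ → ℝ) = fun θ : ℝ => Real.cos ((0 : ℕ) * θ) := by
      funext θ; simp
    rw [h1]
    exact cos_mem_cosSpan (by omega)
  | succ n ih =>
    have h2 := mul_mem_cosSpan ih hf
    rw [pow_succ]
    have h3 : n * m + m = (n + 1) * m := by ring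
    rwa [h3] at h2

/-- Dirichlet kernel. -/
def Dk (s : ℕ) (ψ : ℝ) : ℝ := 1 + 2 * ∑ k ∈ Finset.range s, Real.cos ((k + 1 : ℕ) * ψ)

lemma Dk_mem (s : ℕ) : Dk s ∈ cosSpan s := by
  have h1 : Dk s = (fun θ : ℝ => Real.cos ((0 : ℕ) * θ))
      + ∑ k ∈ Finset.range s, (2 : ℝ) • (fun θ : ℝ => Real.cos ((k + 1 : ℕ) * θ)) := by
    funext θ
    simp only [Pi.add_apply, Finset.sum_apply, Pi.smul_apply, smul_eq_mul, Dk]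
    rw [Nat.cast_zero, zero_mul, Real.cos_zero, Finset.mul_sum]
  rw [h1]
  refine add_mem (cos_mem_cosSpan (Nat.zero_le _))
    (Submodule.sum_mem _ fun k hk => Submodule.smul_mem _ _ (cos_mem_cosSpan ?_))
  exact Nat.succ_le_of_lt (Finset.mem_range.mp hk)

lemma Dk_mul_sin (s : ℕ) (ψ : ℝ) :
    Dk s ψ * Real.sin (ψ / 2) = Real.sin ((2 * (s : ℝ) + 1) * (ψ / 2)) := by
  induction s with
  | zero =>
    simp only [Dk, Finset.range_zero, Finset.sum_empty, mul_zero, add_zero, Nat.cast_zero,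
      one_mul]
    norm_num
  | succ s ih =>
    have hrec : Dk (s + 1) ψ = Dk s ψ + 2 * Real.cos (((s : ℝ) + 1) * ψ) := by
      simp only [Dk, Finset.sum_range_succ]
      push_cast
      ring
    have e1 : (2 * ((s : ℝ) + 1) + 1) * (ψ / 2) = ((s : ℝ) + 1) * ψ + ψ / 2 := by ring
    have e2 : (2 * (s : ℝ) + 1) * (ψ / 2) = ((s : ℝ) + 1) * ψ - ψ / 2 := by ring
    rw [hrec, add_mul, ih]
    push_cast
    rw [e1, e2, Real.sin_add, Real.sin_sub]
    ring

lemma Dk_periodic (s : ℕ) : Function.Periodic (Dk s) (2 * π) := by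
  intro ψ
  unfold Dk
  congr 2
  refine Finset.sum_congr rfl fun k _ => ?_
  have h : ((k + 1 : ℕ) : ℝ) * (ψ + 2 * π) = ((k + 1 : ℕ) : ℝ) * ψ + ((k + 1 : ℕ) : ℝ) * (2 * π) := by
    ring
  rw [h, Real.cos_add_nat_mul_two_pi]

lemma Dk_even (s : ℕ) (ψ : ℝ) : Dk s (-ψ) = Dk s ψ := by
  unfold Dk
  congr 2
  refine Finset.sum_congr rfl fun k _ => ?_
  rw [mul_neg, Real.cos_neg]

lemma Dk_continuous (s : ℕ) : Continuous (Dk s) := by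
  unfold Dk
  exact continuous_const.add (continuous_const.mul (continuous_finset_sum _ fun k _ =>
    Real.continuous_cos.comp (continuous_const.mul continuous_id)))

lemma Dk_abs_le (s : ℕ) {ψ : ℝ} (h : 0 < Real.sin (ψ / 2)) :
    |Dk s ψ| ≤ 1 / Real.sin (ψ / 2) := by
  rw [le_div_iff₀ h]
  have h1 : |Dk s ψ| * Real.sin (ψ / 2) = |Dk s ψ * Real.sin (ψ / 2)| := by
    rw [abs_mul, abs_of_pos h]
  rw [h1, Dk_mul_sin]
  exact abs_le.mpr ⟨Real.neg_one_le_sin _, Real.sin_le_one _⟩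

lemma Dk_ge (s : ℕ) {ψ : ℝ} (h0 : 0 ≤ ψ) (h1 : ψ ≤ 1 / (2 * (s : ℝ) + 1)) :
    (15 / 16) * (2 * (s : ℝ) + 1) ≤ Dk s ψ := by
  have hs0 : (0 : ℝ) ≤ (s : ℝ) := Nat.cast_nonneg s
  have hSpos : (0 : ℝ) < 2 * (s : ℝ) + 1 := by linarith
  rcases eq_or_lt_of_le h0 with heq | hpos
  · rw [← heq]
    have : Dk s 0 = 1 + 2 * (s : ℝ) := by
      simp [Dk]
    rw [this]
    nlinarith
  · have hπ3 : (3 : ℝ) < π := Real.pi_gt_three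
    have hψ1 : ψ ≤ 1 := h1.trans (by rw [div_le_one hSpos]; linarith)
    have hsinpos : 0 < Real.sin (ψ / 2) :=
      Real.sin_pos_of_pos_of_lt_pi (by linarith) (by linarith)
    set A := (2 * (s : ℝ) + 1) * (ψ / 2) with hA
    have hApos : 0 < A := by positivity
    have hA2 : A ≤ 1 / 2 := by
      have h2 := mul_le_mul_of_nonneg_left h1 hSpos.le
      rw [mul_one_div, div_self hSpos.ne'] at h2
      rw [hA]
      nlinarith
    have hsinA : (15 / 16) * A ≤ Real.sin A := by
      have h3 := Real.sin_gt_sub_cube hApos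
      have h4 : A ^ 2 ≤ 1 / 4 := by nlinarith
      have h5 : A ^ 3 ≤ A / 4 := by nlinarith [mul_le_mul_of_nonneg_left h4 hApos.le]
      linarith
    have hsinψ : Real.sin (ψ / 2) < ψ / 2 := Real.sin_lt (by linarith)
    have hmain : (15 / 16) * (2 * (s : ℝ) + 1) * Real.sin (ψ / 2) ≤ Real.sin A := by
      calc (15 / 16) * (2 * (s : ℝ) + 1) * Real.sin (ψ / 2)
          ≤ (15 / 16) * (2 * (s : ℝ) + 1) * (ψ / 2) := by nlinarith
        _ = (15 / 16) * A := by rw [hA]; ring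
        _ ≤ Real.sin A := hsinA
    have hid := Dk_mul_sin s ψ
    rw [← hA] at hid
    rw [← hid] at hmain
    exact le_of_mul_le_mul_right hmain hsinpos

lemma sin_ge_of_mem {w t : ℝ} (hw : 0 < w) (hw2 : w ≤ π / 2) (h1 : w / 4 ≤ t)
    (h2 : t ≤ π - w / 4) : (15 / 64) * w ≤ Real.sin t := by
  have hπ3 : (3 : ℝ) < π := Real.pi_gt_three
  have hπ4 : π ≤ 4 := Real.pi_le_four
  have hsw : (15 / 64) * w ≤ Real.sin (w / 4) := by
    have h3 := Real.sin_gt_sub_cube (by linarith : 0 < w / 4)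
    have hw4 : w ≤ 2 := by linarith
    have hw5 : w ^ 2 ≤ 4 := by nlinarith
    have h5 : w ^ 3 ≤ 4 * w := by nlinarith [mul_le_mul_of_nonneg_left hw5 hw.le]
    linarith
  have key : Real.sin (w / 4) ≤ Real.sin t := by
    rcases le_total t (π / 2) with h | h
    · exact Real.sin_le_sin_of_le_of_le_pi_div_two (by linarith) h h1
    · conv_rhs => rw [← Real.sin_pi_sub]
      exact Real.sin_le_sin_of_le_of_le_pi_div_two (by linarith) (by linarith) (by linarith)
  linarith

lemma natDegree_T_le : ∀ n : ℕ, (Polynomial.Chebyshev.T ℝ (n : ℤ)).natDegree ≤ n := by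
  have key : ∀ n : ℕ, (Polynomial.Chebyshev.T ℝ (n : ℤ)).natDegree ≤ n ∧
      (Polynomial.Chebyshev.T ℝ ((n : ℤ) + 1)).natDegree ≤ n + 1 := by
    intro n
    induction n with
    | zero =>
      constructor
      · simp [Polynomial.Chebyshev.T_zero]
      · norm_num [Polynomial.Chebyshev.T_one]
    | succ n ih =>
      have hcast : ((n + 1 : ℕ) : ℤ) = (n : ℤ) + 1 := by push_cast; ring
      constructor
      · rw [hcast]; exact ih.2
      · rw [hcast, show ((n : ℤ) + 1 + 1) = (n : ℤ) + 2 by ring, Polynomial.Chebyshev.T_add_two]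
        refine (natDegree_sub_le _ _).trans (max_le ?_ (ih.1.trans (by omega)))
        refine (natDegree_mul_le).trans ?_
        have hX : (2 * Polynomial.X : ℝ[X]).natDegree ≤ 1 :=
          (natDegree_mul_le).trans (by simp)
        have := ih.2
        omega
  exact fun n => (key n).1

lemma exists_poly {c : ℝ} {D : ℕ} {f : ℝ → ℝ} (hf : f ∈ cosSpan D) :
    Continuous f ∧ ∃ P : Polynomial ℝ, P.natDegree ≤ D ∧
      ∀ θ : ℝ, P.eval (Real.cos θ) = ∫ ψ in (θ - c)..(θ + c), f ψ := by
  induction hf using Submodule.span_induction with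
  | mem g hg =>
    obtain ⟨j, hj, rfl⟩ := hg
    constructor
    · exact Real.continuous_cos.comp (continuous_const.mul continuous_id)
    by_cases hj0 : j = 0
    · subst hj0
      refine ⟨Polynomial.C (2 * c), (Polynomial.natDegree_C _).le.trans (Nat.zero_le _), fun θ => ?_⟩
      simp only [Nat.cast_zero, zero_mul, Real.cos_zero]
      rw [intervalIntegral.integral_const]
      simp only [eval_C, smul_eq_mul]
      ring
    · have hjR : ((j : ℝ)) ≠ 0 := Nat.cast_ne_zero.mpr hj0
      refine ⟨(2 * Real.sin (j * c) / j) • Polynomial.Chebyshev.T ℝ (j : ℤ), ?_, fun θ => ?_⟩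
      · exact (natDegree_smul_le _ _).trans ((natDegree_T_le j).trans hj)
      · have h1 : (∫ ψ in (θ - c)..(θ + c), Real.cos ((j : ℝ) * ψ))
            = (j : ℝ)⁻¹ • ∫ x in ((j : ℝ) * (θ - c))..((j : ℝ) * (θ + c)), Real.cos x :=
          intervalIntegral.integral_comp_mul_left Real.cos hjR
        rw [h1, integral_cos]
        have h2 : Real.sin ((j : ℝ) * (θ + c)) - Real.sin ((j : ℝ) * (θ - c))
            = 2 * Real.sin ((j : ℝ) * c) * Real.cos ((j : ℝ) * θ) := by
          have e1 : (j : ℝ) * (θ + c) = (j : ℝ) * θ + (j : ℝ) * c := by ring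
          have e2 : (j : ℝ) * (θ - c) = (j : ℝ) * θ - (j : ℝ) * c := by ring
          rw [e1, e2, Real.sin_add, Real.sin_sub]; ring
        rw [h2, Polynomial.eval_smul, Polynomial.Chebyshev.T_real_cos]
        push_cast
        rw [smul_eq_mul, smul_eq_mul]
        field_simp
  | zero =>
    refine ⟨continuous_zero, 0, by simp, fun θ => ?_⟩
    simp
  | add g h hg hh ihg ihh =>
    obtain ⟨hgc, Pg, hPgdeg, hPg⟩ := ihg
    obtain ⟨hhc, Ph, hPhdeg, hPh⟩ := ihh
    refine ⟨hgc.add hhc, Pg + Ph, (natDegree_add_le _ _).trans (max_le hPgdeg hPhdeg),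
      fun θ => ?_⟩
    have hint : (∫ ψ in (θ - c)..(θ + c), (g + h) ψ)
        = (∫ ψ in (θ - c)..(θ + c), g ψ) + ∫ ψ in (θ - c)..(θ + c), h ψ := by
      simp only [Pi.add_apply]
      exact intervalIntegral.integral_add (hgc.intervalIntegrable _ _)
        (hhc.intervalIntegrable _ _)
    rw [hint, Polynomial.eval_add, hPg, hPh]
  | smul a g hg ihg =>
    obtain ⟨hgc, Pg, hdeg, hP⟩ := ihg
    refine ⟨hgc.const_smul a, a • Pg, (natDegree_smul_le _ _).trans hdeg, fun θ => ?_⟩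
    have hint : (∫ ψ in (θ - c)..(θ + c), (a • g) ψ)
        = a • ∫ ψ in (θ - c)..(θ + c), g ψ := by
      simp only [Pi.smul_apply]
      exact intervalIntegral.integral_smul a g
    rw [hint, Polynomial.eval_smul, hP]

end

end GapAmpAux

open Real Polynomial GapAmpAux

set_option maxHeartbeats 4000000 in
/-- The gap-amplification polynomial of the paper's Proposition 1: there is an absolute
constant `C > 0` such that for all `ε ∈ (0,1/100]`, `δ ∈ (0,1/4]`, and
`μ ∈ [-1 + δ, -δ]`, there is an odd real polynomial `q` of degree at most
`C·(√(1 + μ)/δ)·(1 + log(1/δ))·(1 + log(1/ε))^{3/2}` with `|q| ≤ 1` on `[-1,1]`,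
`q(μ) ≤ -1 + 3ε`, and `q(x) ≥ -3ε` for `x ∈ [μ + δ, 1]`. -/
theorem gap_amplification_poly :
    ∃ C : ℝ, 0 < C ∧
      ∀ ε δ μ : ℝ, ε ∈ Set.Ioc (0 : ℝ) (1 / 100) → δ ∈ Set.Ioc (0 : ℝ) (1 / 4) →
        μ ∈ Set.Icc (-1 + δ) (-δ) →
        ∃ q : Polynomial ℝ,
          (∀ x : ℝ, q.eval (-x) = -q.eval x) ∧
          (q.natDegree : ℝ) ≤
            C * (Real.sqrt (1 + μ) / δ) * (1 + Real.log (1 / δ)) *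
              (1 + Real.log (1 / ε)) ^ ((3 : ℝ) / 2) ∧
          (∀ x ∈ Set.Icc (-1 : ℝ) 1, |q.eval x| ≤ 1) ∧
          q.eval μ ≤ -1 + 3 * ε ∧
          (∀ x ∈ Set.Icc (μ + δ) 1, -(3 * ε) ≤ q.eval x) := by
  refine ⟨10000, by norm_num, ?_⟩
  rintro ε δ μ ⟨hε0, hε1⟩ ⟨hδ0, hδ1⟩ ⟨hμ1, hμ2⟩
  have hπ3 : (3 : ℝ) < π := Real.pi_gt_three
  have hπ4 : π ≤ 4 := Real.pi_le_four
  set a : ℝ := -μ with ha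
  have haδ : δ ≤ a := by simp only [ha]; linarith
  have ha1 : a ≤ 1 - δ := by simp only [ha]; linarith
  set d : ℝ := 1 + μ with hd
  have hdδ : δ ≤ d := by simp only [hd]; linarith
  have hd1 : d ≤ 1 := by simp only [hd]; linarith
  have h0aδ : 0 ≤ a - δ := by linarith
  have haδ1 : a - δ ≤ 1 := by linarith
  have ha01 : 0 ≤ a := by linarith
  have ha1' : a ≤ 1 := by linarith
  set θ₀ : ℝ := Real.arccos a with hθ₀
  set θ₁ : ℝ := Real.arccos (a - δ) with hθ₁
  have hθ₀0 : 0 ≤ θ₀ := Real.arccos_nonneg a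
  have hθ₁0 : 0 ≤ θ₁ := Real.arccos_nonneg _
  have hθ₀2 : θ₀ ≤ π / 2 := Real.arccos_le_pi_div_two.mpr ha01
  have hθ₁2 : θ₁ ≤ π / 2 := Real.arccos_le_pi_div_two.mpr h0aδ
  have hcos0 : Real.cos θ₀ = a := Real.cos_arccos (by linarith) ha1'
  have hcos1 : Real.cos θ₁ = a - δ := Real.cos_arccos (by linarith) haδ1
  have hθ01 : θ₀ ≤ θ₁ := by
    rw [hθ₀, hθ₁, Real.arccos_eq_pi_div_two_sub_arcsin, Real.arccos_eq_pi_div_two_sub_arcsin]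
    have := Real.monotone_arcsin (by linarith : a - δ ≤ a)
    linarith
  have hθne : θ₀ ≠ θ₁ := by
    intro h
    rw [h, hcos1] at hcos0
    linarith
  set w : ℝ := θ₁ - θ₀ with hw
  have hwpos : 0 < w := by
    rcases lt_or_eq_of_le hθ01 with h | h
    · simp only [hw]; linarith
    · exact absurd h hθne
  have hw2 : w ≤ π / 2 := by simp only [hw]; linarith
  set cθ : ℝ := (θ₀ + θ₁) / 2 with hcθ
  have hcθ0 : 0 ≤ cθ := by simp only [hcθ]; linarith
  have hcθ2 : cθ ≤ π / 2 := by simp only [hcθ]; linarith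
  have hcθw0 : cθ = θ₀ + w / 2 := by simp only [hcθ, hw]; ring
  have hcθw1 : θ₁ = cθ + w / 2 := by simp only [hcθ, hw]; ring
  clear_value cθ w θ₁ θ₀ d a
  -- lower bound on w
  have hsin1 : Real.sin θ₁ ≤ 2 * Real.sqrt d := by
    rw [hθ₁, Real.sin_arccos]
    have hda : d = 1 - a := by simp only [hd, ha]; ring
    have h4d : 1 - (a - δ) ^ 2 ≤ 4 * d := by
      have e : 1 - (a - δ) ^ 2 = (1 - a + δ) * (1 + a - δ) := by ring
      have b1 : 1 + a - δ ≤ 2 := by linarith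
      have b2 : 1 - a + δ ≤ 2 * d := by linarith
      have b3 := mul_le_mul b2 b1 (by linarith) (by linarith)
      linarith only [e, b3]
    calc Real.sqrt (1 - (a - δ) ^ 2) ≤ Real.sqrt (4 * d) := Real.sqrt_le_sqrt h4d
      _ = 2 * Real.sqrt d := by
          rw [show (4 : ℝ) * d = 2 ^ 2 * d by ring, Real.sqrt_mul (by norm_num : (0:ℝ) ≤ 2 ^ 2),
            Real.sqrt_sq (by norm_num : (0:ℝ) ≤ 2)]
  have hδw : δ ≤ 2 * Real.sqrt d * w := by
    have hid : δ = 2 * Real.sin cθ * Real.sin (w / 2) := by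
      have hcc := Real.cos_sub_cos θ₀ θ₁
      rw [hcos0, hcos1] at hcc
      have hsneg : Real.sin ((θ₀ - θ₁) / 2) = -Real.sin (w / 2) := by
        rw [show (θ₀ - θ₁) / 2 = -(w / 2) by simp only [hw]; ring, Real.sin_neg]
      rw [hsneg] at hcc
      have : (θ₀ + θ₁) / 2 = cθ := by rw [hcθ]
      rw [this] at hcc
      linarith
    have hsc : Real.sin cθ ≤ Real.sin θ₁ :=
      Real.sin_le_sin_of_le_of_le_pi_div_two (by linarith) hθ₁2 (by simp only [hcθ]; linarith)
    have hsw2 : Real.sin (w / 2) ≤ w / 2 := by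
      rcases eq_or_lt_of_le (by linarith : (0:ℝ) ≤ w / 2) with h | h
      · rw [← h]; simp
      · exact (Real.sin_lt h).le
    have hscpos : 0 ≤ Real.sin cθ := Real.sin_nonneg_of_nonneg_of_le_pi hcθ0 (by linarith)
    have hswpos : 0 ≤ Real.sin (w / 2) :=
      Real.sin_nonneg_of_nonneg_of_le_pi (by linarith) (by linarith)
    have hsθ1pos : 0 ≤ Real.sin θ₁ := Real.sin_nonneg_of_nonneg_of_le_pi hθ₁0 (by linarith)
    have t1 : Real.sin cθ * Real.sin (w / 2) ≤ Real.sin θ₁ * (w / 2) :=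
      mul_le_mul hsc hsw2 hswpos hsθ1pos
    have t2 : Real.sin θ₁ * (w / 2) ≤ (2 * Real.sqrt d) * (w / 2) :=
      mul_le_mul_of_nonneg_right hsin1 (by linarith)
    linarith only [hid, t1, t2]
  have hdpos : 0 < d := lt_of_lt_of_le hδ0 hdδ
  have hsqd_pos : 0 < Real.sqrt d := Real.sqrt_pos.mpr hdpos
  have hwinv : 1 / w ≤ 2 * Real.sqrt d / δ := by
    rw [div_le_div_iff₀ hwpos hδ0]
    linarith only [hδw]
  -- choose s and r
  set s : ℕ := ⌈(9 : ℝ) / w⌉₊ with hs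
  have hs_lb : (9 : ℝ) / w ≤ (s : ℝ) := Nat.le_ceil _
  have h3w : (1 : ℝ) ≤ 3 / w := by rw [le_div_iff₀ hwpos]; linarith
  have hs_ub : (s : ℝ) ≤ 12 / w := by
    have h9 : (0 : ℝ) ≤ 9 / w := by positivity
    have h10 := Nat.ceil_lt_add_one h9
    have h12 : (9:ℝ) / w + 3 / w = 12 / w := by ring
    simp only [hs]
    linarith
  set S : ℝ := 2 * (s : ℝ) + 1 with hS
  have hS18 : 18 / w ≤ S := by
    have : (18:ℝ) / w = 2 * (9 / w) := by ring
    simp only [hS]; linarith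
  have hS27 : S ≤ 27 / w := by
    have h1 : (2:ℝ) * (12 / w) + 3 / w = 27 / w := by ring
    simp only [hS]; linarith
  have hSpos : (0 : ℝ) < S := by
    have : (0:ℝ) < 18 / w := by positivity
    linarith
  have hS9 : (9 : ℝ) ≤ S := by
    have h1 : (9:ℝ) ≤ 18 / w := by rw [le_div_iff₀ hwpos]; linarith
    linarith
  clear_value S
  -- r
  have hwεpos : (0 : ℝ) < w * ε := by positivity
  have harg1 : (1 : ℝ) ≤ 108 / (w * ε) := by
    rw [le_div_iff₀ hwεpos]
    have hwle : w ≤ 2 := by linarith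
    have : w * ε ≤ 2 * (1 / 100) := mul_le_mul hwle hε1 hε0.le (by norm_num)
    linarith only [this]
  have hargpos : (0 : ℝ) < 108 / (w * ε) := by positivity
  set r : ℕ := 1 + ⌈Real.log (108 / (w * ε))⌉₊ with hr
  have hlognn : 0 ≤ Real.log (108 / (w * ε)) := Real.log_nonneg harg1
  have hr_lb : Real.log (108 / (w * ε)) + 1 ≤ (r : ℝ) := by
    have := Nat.le_ceil (Real.log (108 / (w * ε)))
    simp only [hr]
    push_cast
    linarith
  clear_value s r
  have h4r : 108 / w ≤ ε * 4 ^ r := by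
    have hlog4 : (1 : ℝ) ≤ Real.log 4 := by
      have h1 : Real.exp 1 ≤ 4 := by
        have := Real.exp_one_lt_d9
        linarith
      calc (1:ℝ) = Real.log (Real.exp 1) := (Real.log_exp 1).symm
        _ ≤ Real.log 4 := Real.log_le_log (Real.exp_pos 1) h1
    have h2 : (4 : ℝ) ^ r = Real.exp ((r : ℝ) * Real.log 4) := by
      rw [← Real.log_pow, Real.exp_log (by positivity)]
    have h3 : Real.log (108 / (w * ε)) + 1 ≤ (r : ℝ) * Real.log 4 := by
      have hrn : (0:ℝ) ≤ (r:ℝ) := Nat.cast_nonneg r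
      have h4 := mul_le_mul_of_nonneg_left hlog4 hrn
      rw [mul_one] at h4
      linarith only [hr_lb, h4]
    have h5 : 108 / (w * ε) * Real.exp 1 ≤ (4:ℝ) ^ r := by
      rw [h2, ← Real.exp_log hargpos, ← Real.exp_add]
      exact Real.exp_le_exp.mpr h3
    have he1 : (1 : ℝ) ≤ Real.exp 1 := by
      have := Real.add_one_le_exp (1 : ℝ)
      linarith
    have h6 : 108 / (w * ε) ≤ (4:ℝ) ^ r := by
      have h7 := mul_le_mul_of_nonneg_left he1 hargpos.le
      rw [mul_one] at h7
      linarith only [h5, h7]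
    have h7 : 108 / w = ε * (108 / (w * ε)) := by field_simp
    rw [h7]
    exact mul_le_mul_of_nonneg_left h6 hε0.le
  -- kernel
  set m : ℝ := (15 / 16) * S with hm
  set B : ℝ := 64 / (15 * w) with hB
  have hBpos : 0 < B := by positivity
  have hmpos : 0 < m := by positivity
  have hmB : 2 * B ≤ m := by
    have hwi : (0:ℝ) < 1 / w := by positivity
    have h1 : (15/16 : ℝ) * (18 / w) ≤ m := by
      simp only [hm]
      linarith only [hS18]
    have h2 : (2:ℝ) * (64 / (15 * w)) ≤ (15/16) * (18 / w) := by
      have e1 : (2:ℝ) * (64 / (15 * w)) = (128 / 15) * (1 / w) := by ring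
      have e2 : (15/16 : ℝ) * (18 / w) = (270 / 16) * (1 / w) := by ring
      rw [e1, e2]
      linarith only [hwi]
    simp only [hB]
    linarith only [h1, h2]
  clear_value m B
  set K : ℝ → ℝ := fun ψ => (Dk s ψ) ^ (2 * r) with hK
  have hKcont : Continuous K := (Dk_continuous s).pow _
  clear_value K
  have hKint : ∀ x y : ℝ, IntervalIntegrable K MeasureTheory.volume x y :=
    fun x y => hKcont.intervalIntegrable x y
  have hKnn : ∀ ψ, 0 ≤ K ψ := fun ψ => by
    simp only [hK]
    rw [show 2 * r = r * 2 by ring, pow_mul]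
    positivity
  have hKper : Function.Periodic K (2 * π) := fun ψ => by
    simp only [hK, Dk_periodic s ψ]
  have hKle : ∀ ψ : ℝ, w / 4 ≤ ψ / 2 → ψ / 2 ≤ π - w / 4 → K ψ ≤ B ^ (2 * r) := by
    intro ψ hl hu
    have hsin := sin_ge_of_mem hwpos hw2 hl hu
    have hsinpos : 0 < Real.sin (ψ / 2) := lt_of_lt_of_le (by positivity) hsin
    have habs : |Dk s ψ| ≤ B := by
      have h1 : |Dk s ψ| ≤ 1 / Real.sin (ψ / 2) := Dk_abs_le s hsinpos
      have h2 : 1 / Real.sin (ψ / 2) ≤ 1 / ((15 / 64) * w) := by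
        apply one_div_le_one_div_of_le (by positivity) hsin
      have h3 : 1 / ((15 / 64 : ℝ) * w) = B := by
        simp only [hB]
        rw [eq_div_iff (by positivity)]
        field_simp
      linarith
    calc K ψ = |Dk s ψ| ^ (2 * r) := by
          simp only [hK]
          rw [← abs_pow, abs_of_nonneg]
          rw [show 2 * r = r * 2 by ring, pow_mul]
          positivity
      _ ≤ B ^ (2 * r) := pow_le_pow_left₀ (abs_nonneg _) habs _
  have hKge : ∀ ψ : ℝ, |ψ| ≤ 1 / S → m ^ (2 * r) ≤ K ψ := by
    intro ψ hψ
    have hDk : m ≤ Dk s ψ := by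
      have habs : Dk s ψ = Dk s |ψ| := by
        rcases abs_cases ψ with ⟨h1, _⟩ | ⟨h1, _⟩
        · rw [h1]
        · rw [h1, Dk_even]
      rw [habs]
      have := Dk_ge s (abs_nonneg ψ) (by simpa [hS] using hψ)
      simp only [hm, hS]
      linarith [this]
    simp only [hK]
    exact pow_le_pow_left₀ hmpos.le hDk _
  -- integrals
  set Z : ℝ := ∫ ψ in (-π)..π, K ψ with hZ
  have hZt : ∀ t : ℝ, (∫ ψ in t..(t + 2 * π), K ψ) = Z := by
    intro t
    rw [hKper.intervalIntegral_add_eq t (-π), show -π + 2 * π = π by ring]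
  clear_value Z
  set num : ℝ → ℝ := fun θ => ∫ ψ in (θ - cθ)..(θ + cθ), K ψ with hnum
  have hnum_nn : ∀ θ, 0 ≤ num θ := fun θ =>
    intervalIntegral.integral_nonneg (by linarith) fun ψ _ => hKnn ψ
  have hnum_le : ∀ θ, num θ ≤ Z := by
    intro θ
    have hsplit := intervalIntegral.integral_add_adjacent_intervals
      (a := θ - cθ) (b := θ + cθ) (c := θ - cθ + 2 * π) (hKint _ _) (hKint _ _)
    have h2 : 0 ≤ ∫ ψ in (θ + cθ)..(θ - cθ + 2 * π), K ψ :=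
      intervalIntegral.integral_nonneg (by linarith) fun ψ _ => hKnn ψ
    have h3 := hZt (θ - cθ)
    simp only [hnum]
    linarith only [hsplit, h2, h3]
  have hZ_lb : (2 / S) * m ^ (2 * r) ≤ Z := by
    have huS : (0:ℝ) < 1 / S := by positivity
    have huπ : (1:ℝ) / S ≤ π := by
      have : (1:ℝ) / S ≤ 1 / 9 := by
        apply one_div_le_one_div_of_le (by norm_num) hS9
      linarith
    have h1 : ((1 / S) - (-(1 / S))) • (m ^ (2 * r)) ≤ ∫ ψ in (-(1 / S))..(1 / S), K ψ := by
      rw [← intervalIntegral.integral_const]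
      apply intervalIntegral.integral_mono_on (by linarith) (intervalIntegrable_const) (hKint _ _)
      intro ψ hψ
      apply hKge
      rw [abs_le]
      exact ⟨hψ.1, hψ.2⟩
    have e1 := intervalIntegral.integral_add_adjacent_intervals
      (a := -π) (b := -(1 / S)) (c := 1 / S) (hKint _ _) (hKint _ _)
    have e2 := intervalIntegral.integral_add_adjacent_intervals
      (a := -π) (b := 1 / S) (c := π) (hKint _ _) (hKint _ _)
    have n1 : 0 ≤ ∫ ψ in (-π)..(-(1 / S)), K ψ :=
      intervalIntegral.integral_nonneg (by linarith) fun ψ _ => hKnn ψ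
    have n2 : 0 ≤ ∫ ψ in (1 / S)..π, K ψ :=
      intervalIntegral.integral_nonneg (by linarith) fun ψ _ => hKnn ψ
    have hsm : ((1 / S) - (-(1 / S))) • (m ^ (2 * r)) = (2 / S) * m ^ (2 * r) := by
      rw [smul_eq_mul]
      ring
    rw [hsm] at h1
    simp only [hZ]
    linarith only [h1, e1, e2, n1, n2]
  have hZpos : 0 < Z :=
    lt_of_lt_of_le (mul_pos (div_pos (by norm_num) hSpos) (pow_pos hmpos _)) hZ_lb
  have htail : 2 * π * B ^ (2 * r) ≤ ε * Z := by
    have hp1 : (4:ℝ) ^ r * B ^ (2 * r) ≤ m ^ (2 * r) := by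
      have h1 : ((2 * B)) ^ (2 * r) ≤ m ^ (2 * r) := pow_le_pow_left₀ (by positivity) hmB _
      have h2 : ((2 * B)) ^ (2 * r) = (4:ℝ) ^ r * B ^ (2 * r) := by
        rw [mul_pow]
        congr 1
        rw [show (4:ℝ) = 2 ^ 2 by norm_num, ← pow_mul]
      linarith [h2 ▸ h1]
    have hπS : π * S ≤ 108 / w := by
      calc π * S ≤ 4 * (27 / w) := by
            apply mul_le_mul hπ4 hS27 hSpos.le (by norm_num)
        _ = 108 / w := by ring
    have hp2 : 2 * π ≤ (2 / S) * (108 / w) := by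
      rw [div_mul_eq_mul_div, le_div_iff₀ hSpos]
      linarith only [hπS]
    calc 2 * π * B ^ (2 * r) ≤ ((2 / S) * (108 / w)) * B ^ (2 * r) := by
          apply mul_le_mul_of_nonneg_right hp2 (by positivity)
      _ ≤ ((2 / S) * (ε * 4 ^ r)) * B ^ (2 * r) := by
          apply mul_le_mul_of_nonneg_right _ (by positivity)
          apply mul_le_mul_of_nonneg_left h4r (by positivity)
      _ = ε * ((2 / S) * (4 ^ r * B ^ (2 * r))) := by ring
      _ ≤ ε * ((2 / S) * m ^ (2 * r)) := by
          apply mul_le_mul_of_nonneg_left _ hε0.le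
          apply mul_le_mul_of_nonneg_left hp1 (by positivity)
      _ ≤ ε * Z := mul_le_mul_of_nonneg_left hZ_lb hε0.le
  -- N3
  have hN3 : ∀ θ : ℝ, θ₁ ≤ θ → θ ≤ π → num θ ≤ ε * Z := by
    intro θ h1 h2
    have hw12 : θ₁ - cθ = w / 2 := by rw [hcθw1]; ring
    have hb : ∀ ψ ∈ Set.Icc (θ - cθ) (θ + cθ), K ψ ≤ B ^ (2 * r) := by
      intro ψ hψ
      apply hKle
      · linarith [hψ.1]
      · linarith [hψ.2]
    have hmono := intervalIntegral.integral_mono_on (by linarith : θ - cθ ≤ θ + cθ)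
      (hKint _ _) (intervalIntegrable_const) hb
    rw [intervalIntegral.integral_const, smul_eq_mul] at hmono
    have hlen : (θ + cθ - (θ - cθ)) * B ^ (2 * r) ≤ 2 * π * B ^ (2 * r) := by
      apply mul_le_mul_of_nonneg_right _ (by positivity)
      linarith
    simp only [hnum]
    linarith only [hmono, hlen, htail]
  -- N2
  have hN2 : (1 - ε) * Z ≤ num θ₀ := by
    have hsplit := intervalIntegral.integral_add_adjacent_intervals
      (a := θ₀ - cθ) (b := θ₀ + cθ) (c := θ₀ - cθ + 2 * π) (hKint _ _) (hKint _ _)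
    have hZeq := hZt (θ₀ - cθ)
    have hb : ∀ ψ ∈ Set.Icc (θ₀ + cθ) (θ₀ - cθ + 2 * π), K ψ ≤ B ^ (2 * r) := by
      intro ψ hψ
      have hwc : θ₀ - cθ = -(w / 2) := by rw [hcθw0]; ring
      apply hKle
      · have := hψ.1
        rw [hcθw0] at this
        linarith
      · have := hψ.2
        rw [hwc] at this
        linarith
    have hmono := intervalIntegral.integral_mono_on
      (by linarith : θ₀ + cθ ≤ θ₀ - cθ + 2 * π) (hKint _ _) (intervalIntegrable_const) hb
    rw [intervalIntegral.integral_const, smul_eq_mul] at hmono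
    have hlen : (θ₀ - cθ + 2 * π - (θ₀ + cθ)) * B ^ (2 * r) ≤ 2 * π * B ^ (2 * r) := by
      apply mul_le_mul_of_nonneg_right _ (by positivity)
      linarith
    simp only [hnum]
    linarith only [hmono, hlen, htail, hsplit, hZeq]
  -- polynomial
  have hKmem : K ∈ cosSpan (2 * r * s) := by
    have h1 : K = (Dk s) ^ (2 * r) := by
      funext ψ
      simp [hK]
    rw [h1]
    exact pow_mem_cosSpan (Dk_mem s) (2 * r)
  obtain ⟨-, P, hPdeg, hPval⟩ := exists_poly (c := cθ) hKmem
  set q : Polynomial ℝ := Z⁻¹ • (P - P.comp (-Polynomial.X)) with hq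
  have hqeval : ∀ x : ℝ, q.eval x = Z⁻¹ * (P.eval x - P.eval (-x)) := by
    intro x
    simp [hq, Polynomial.eval_smul, smul_eq_mul]
  have hPnum : ∀ θ : ℝ, P.eval (Real.cos θ) = num θ := fun θ => hPval θ
  clear_value num
  have hZinv : 0 < Z⁻¹ := inv_pos.mpr hZpos
  have hZZ : Z⁻¹ * Z = 1 := inv_mul_cancel₀ hZpos.ne'
  refine ⟨q, ?_, ?_, ?_, ?_, ?_⟩
  · intro x
    rw [hqeval, hqeval, neg_neg]
    ring
  · -- degree bound
    have hqdeg : q.natDegree ≤ 2 * r * s := by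
      refine (natDegree_smul_le _ _).trans ?_
      refine (natDegree_sub_le _ _).trans (max_le hPdeg ?_)
      refine (natDegree_comp_le).trans ?_
      have h1 : (-Polynomial.X : ℝ[X]).natDegree = 1 := by
        rw [natDegree_neg, natDegree_X]
      rw [h1, mul_one]
      exact hPdeg
    have hcast : (q.natDegree : ℝ) ≤ ((2 * r * s : ℕ) : ℝ) := Nat.cast_le.mpr hqdeg
    have hLδ : 0 ≤ Real.log (1 / δ) := Real.log_nonneg (by
      rw [le_div_iff₀ hδ0]; linarith)
    have hLε : 0 ≤ Real.log (1 / ε) := Real.log_nonneg (by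
      rw [le_div_iff₀ hε0]; linarith)
    have hr_ub : (r : ℝ) ≤ 110 * (1 + Real.log (1 / δ)) * (1 + Real.log (1 / ε)) := by
      have hceil : (⌈Real.log (108 / (w * ε))⌉₊ : ℝ) < Real.log (108 / (w * ε)) + 1 :=
        Nat.ceil_lt_add_one hlognn
      have hlogsplit : Real.log (108 / (w * ε)) = Real.log 108 + Real.log (1 / w) + Real.log (1 / ε) := by
        rw [show 108 / (w * ε) = 108 * (1 / w) * (1 / ε) by field_simp,
          Real.log_mul (by positivity) (by positivity),
          Real.log_mul (by norm_num) (by positivity)]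
      have h108 : Real.log 108 ≤ 107 := by
        have := Real.log_le_sub_one_of_pos (by norm_num : (0:ℝ) < 108)
        linarith
      have hlogw : Real.log (1 / w) ≤ Real.log 2 + Real.log (1 / δ) := by
        have hsd1 : Real.sqrt d ≤ 1 := by
          rw [show (1:ℝ) = Real.sqrt 1 by rw [Real.sqrt_one]]
          exact Real.sqrt_le_sqrt hd1
        have h2d : 1 / w ≤ 2 * (1 / δ) := by
          calc 1 / w ≤ 2 * Real.sqrt d / δ := hwinv
            _ ≤ 2 / δ := by
                apply (div_le_div_iff_of_pos_right hδ0).mpr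
                linarith only [hsd1]
            _ = 2 * (1 / δ) := by ring
        calc Real.log (1 / w) ≤ Real.log (2 * (1 / δ)) :=
              Real.log_le_log (by positivity) h2d
          _ = Real.log 2 + Real.log (1 / δ) := Real.log_mul (by norm_num) (by positivity)
      have hlog2 : Real.log 2 ≤ 1 := by
        have := Real.log_le_sub_one_of_pos (by norm_num : (0:ℝ) < 2)
        linarith
      have hrle : (r : ℝ) ≤ Real.log (108 / (w * ε)) + 2 := by
        simp only [hr]
        push_cast
        linarith
      linarith only [hrle, hlogsplit.le, h108, hlogw, hlog2, hLδ, hLε, mul_nonneg hLδ hLε]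
    have hs_ub2 : (s : ℝ) ≤ 24 * Real.sqrt d / δ := by
      calc (s : ℝ) ≤ 12 / w := hs_ub
        _ = 12 * (1 / w) := by ring
        _ ≤ 12 * (2 * Real.sqrt d / δ) := by linarith [hwinv]
        _ = 24 * Real.sqrt d / δ := by ring
    have hrpow : (1 + Real.log (1 / ε)) ≤ (1 + Real.log (1 / ε)) ^ ((3 : ℝ) / 2) := by
      nth_rewrite 1 [← Real.rpow_one (1 + Real.log (1 / ε))]
      exact Real.rpow_le_rpow_of_exponent_le (by linarith) (by norm_num)
    have hmain : ((2 * r * s : ℕ) : ℝ)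
        ≤ 5280 * (Real.sqrt d / δ) * (1 + Real.log (1 / δ)) * (1 + Real.log (1 / ε)) := by
      push_cast
      have hrs := mul_le_mul hr_ub hs_ub2 (Nat.cast_nonneg s) (by positivity)
      calc (2 : ℝ) * r * s = 2 * ((r : ℝ) * s) := by ring
        _ ≤ 2 * ((110 * (1 + Real.log (1 / δ)) * (1 + Real.log (1 / ε))) * (24 * Real.sqrt d / δ)) := by
            linarith only [hrs]
        _ = 5280 * (Real.sqrt d / δ) * (1 + Real.log (1 / δ)) * (1 + Real.log (1 / ε)) := by
            ring
    have hfin : 5280 * (Real.sqrt d / δ) * (1 + Real.log (1 / δ)) * (1 + Real.log (1 / ε))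
        ≤ 10000 * (Real.sqrt d / δ) * (1 + Real.log (1 / δ)) * (1 + Real.log (1 / ε)) ^ ((3:ℝ)/2) := by
      have h1 : 5280 * (Real.sqrt d / δ) * (1 + Real.log (1 / δ)) * (1 + Real.log (1 / ε))
          ≤ 5280 * (Real.sqrt d / δ) * (1 + Real.log (1 / δ)) * (1 + Real.log (1 / ε)) ^ ((3:ℝ)/2) :=
        mul_le_mul_of_nonneg_left hrpow (by positivity)
      have h2 : 5280 * (Real.sqrt d / δ) * (1 + Real.log (1 / δ)) * (1 + Real.log (1 / ε)) ^ ((3:ℝ)/2)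
          ≤ 10000 * (Real.sqrt d / δ) * (1 + Real.log (1 / δ)) * (1 + Real.log (1 / ε)) ^ ((3:ℝ)/2) := by
        have hnn : (0:ℝ) ≤ (Real.sqrt d / δ) * (1 + Real.log (1 / δ)) * (1 + Real.log (1 / ε)) ^ ((3:ℝ)/2) := by
          have := Real.rpow_nonneg (by linarith : (0:ℝ) ≤ 1 + Real.log (1 / ε)) ((3:ℝ)/2)
          positivity
        linarith only [hnn]
      linarith
    calc (q.natDegree : ℝ) ≤ ((2 * r * s : ℕ) : ℝ) := hcast
      _ ≤ 5280 * (Real.sqrt d / δ) * (1 + Real.log (1 / δ)) * (1 + Real.log (1 / ε)) := hmain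
      _ ≤ 10000 * (Real.sqrt d / δ) * (1 + Real.log (1 / δ)) * (1 + Real.log (1 / ε)) ^ ((3:ℝ)/2) := hfin
  · -- boundedness
    rintro x ⟨hx1, hx2⟩
    set θ := Real.arccos x with hθ
    have hcx : Real.cos θ = x := Real.cos_arccos hx1 hx2
    have h1 : P.eval x = num θ := by rw [← hcx, hPnum]
    have h2 : P.eval (-x) = num (π - θ) := by
      have hc2 : Real.cos (π - θ) = -x := by rw [Real.cos_pi_sub, hcx]
      rw [← hc2, hPnum]
    rw [hqeval, h1, h2]
    have b1 := hnum_nn θ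
    have b2 := hnum_le θ
    have b3 := hnum_nn (π - θ)
    have b4 := hnum_le (π - θ)
    rw [abs_le]
    constructor
    · have h := mul_le_mul_of_nonneg_left
        (show -Z ≤ num θ - num (π - θ) by linarith only [b1, b4]) hZinv.le
      have he : Z⁻¹ * (-Z) = -1 := by
        rw [mul_neg, hZZ]
      rw [he] at h
      linarith only [h]
    · have h := mul_le_mul_of_nonneg_left (show num θ - num (π - θ) ≤ Z by linarith) hZinv.le
      linarith [hZZ ▸ h]
  · -- value at μ
    have hμa : μ = -a := by simp only [ha]; ring
    have hc2 : Real.cos (π - θ₀) = μ := by rw [Real.cos_pi_sub, hcos0, hμa]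
    have h1 : P.eval μ = num (π - θ₀) := by rw [← hc2, hPnum]
    have h2 : P.eval (-μ) = num θ₀ := by
      have : Real.cos θ₀ = -μ := by rw [hcos0, hμa]; ring
      rw [← this, hPnum]
    rw [hqeval, h1, h2]
    have hup : num (π - θ₀) ≤ ε * Z := hN3 (π - θ₀) (by linarith) (by linarith)
    have hlo : (1 - ε) * Z ≤ num θ₀ := hN2
    have h := mul_le_mul_of_nonneg_left
      (show num (π - θ₀) - num θ₀ ≤ (2 * ε - 1) * Z by linarith only [hup, hlo]) hZinv.le
    have he : Z⁻¹ * ((2 * ε - 1) * Z) = 2 * ε - 1 := by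
      rw [show Z⁻¹ * ((2 * ε - 1) * Z) = (2 * ε - 1) * (Z⁻¹ * Z) by ring, hZZ, mul_one]
    rw [he] at h
    linarith only [h, hε0]
  · -- lower bound on [μ+δ, 1]
    rintro x ⟨hx1, hx2⟩
    have hxm1 : (-1 : ℝ) ≤ x := by linarith
    set θ := Real.arccos x with hθ
    have hcx : Real.cos θ = x := Real.cos_arccos hxm1 hx2
    have hθ0 : 0 ≤ θ := Real.arccos_nonneg x
    have hθπ : θ ≤ π := Real.arccos_le_pi x
    have h1 : P.eval x = num θ := by rw [← hcx, hPnum]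
    have h2 : P.eval (-x) = num (π - θ) := by
      have hc2 : Real.cos (π - θ) = -x := by rw [Real.cos_pi_sub, hcx]
      rw [← hc2, hPnum]
    have hθle : θ ≤ π - θ₁ := by
      have hax : μ + δ = -(a - δ) := by simp only [ha]; ring
      have harc : Real.arccos (μ + δ) = π - θ₁ := by
        rw [hax, Real.arccos_neg, hθ₁]
      rw [← harc, hθ]
      rw [Real.arccos_eq_pi_div_two_sub_arcsin, Real.arccos_eq_pi_div_two_sub_arcsin]
      have := Real.monotone_arcsin hx1
      linarith
    have hup : num (π - θ) ≤ ε * Z := hN3 (π - θ) (by linarith) (by linarith)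
    rw [hqeval, h1, h2]
    have h := mul_le_mul_of_nonneg_left
      (show -(ε * Z) ≤ num θ - num (π - θ) by linarith only [hnum_nn θ, hup]) hZinv.le
    have he : Z⁻¹ * (-(ε * Z)) = -ε := by
      rw [show Z⁻¹ * (-(ε * Z)) = -ε * (Z⁻¹ * Z) by ring, hZZ, mul_one]
    rw [he] at h
    linarith only [h, hε0]
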